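/- Let R be a commutative ring and q ∈ R any invertible element. Then the elements σ1 and σ2 commute with each other in the quantum group O_q(SL_3): σ1 σ2 = σ2 σ1. -/

import Mathlib

noncomputable section

namespace QSL3

/-- Number of inversions of a permutation of `Fin 3`. -/
def len (σ : Equiv.Perm (Fin 3)) : ℕ :=
  (Finset.univ.filter fun p : Fin 3 × Fin 3 => p.1 < p.2 ∧ σ p.2 < σ p.1).card

variable (R : Type) [CommRing R] (q : Rˣ)

/-- The generator `X i j` of the free algebra. -/
def gen (i j : Fin 3) : FreeAlgebra R (Fin 3 × Fin 3) := FreeAlgebra.ι R (i, j)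

/-- The defining relations of the quantum group `O_q(SL_3)`. -/
inductive Rel : FreeAlgebra R (Fin 3 × Fin 3) → FreeAlgebra R (Fin 3 × Fin 3) → Prop
  | q_comm (i j l m : Fin 3) (h : (l < i ∧ j = m) ∨ (i = l ∧ m < j)) :
      Rel (gen R i j * gen R l m) (((q⁻¹ : Rˣ) : R) • (gen R l m * gen R i j))
  | comm (i j l m : Fin 3) (h : i < l ∧ m < j) :
      Rel (gen R i j * gen R l m) (gen R l m * gen R i j)
  | exch (i j l m : Fin 3) (h : l < i ∧ m < j) :
      Rel (gen R i j * gen R l m)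
        (gen R l m * gen R i j - ((q : R) - ((q⁻¹ : Rˣ) : R)) • (gen R i m * gen R l j))
  | det : Rel (∑ σ : Equiv.Perm (Fin 3),
      (-(q : R)) ^ len σ • (gen R (σ 0) 0 * gen R (σ 1) 1 * gen R (σ 2) 2)) 1

/-- The quantum group `O_q(SL_3)`. -/
def Oq := RingQuot (Rel R q)

instance : Ring (Oq R q) := inferInstanceAs (Ring (RingQuot (Rel R q)))
instance : Algebra R (Oq R q) := inferInstanceAs (Algebra R (RingQuot (Rel R q)))

/-- The generator `X i j` of `O_q(SL_3)`. -/
def X (i j : Fin 3) : Oq R q := RingQuot.mkAlgHom R (Rel R q) (gen R i j)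

/-- `σ1`, the trace of the matrix of generators. -/
def s1 : Oq R q := X R q 0 0 + X R q 1 1 + X R q 2 2

/-- `σ2`, the sum of the principal 2×2 quantum minors. -/
def s2 : Oq R q :=
  (X R q 0 0 * X R q 1 1 - (q : R) • (X R q 0 1 * X R q 1 0))
  + (X R q 0 0 * X R q 2 2 - (q : R) • (X R q 0 2 * X R q 2 0))
  + (X R q 1 1 * X R q 2 2 - (q : R) • (X R q 1 2 * X R q 2 1))

/-- `q` is a root of unity of order `N`. -/
def IsRootOfOrder (x : R) (N : ℕ) : Prop :=
  x ^ N = 1 ∧ ∀ k : ℕ, 0 < k → k < N → x ^ k ≠ 1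

end QSL3

/-- The power sum polynomials `P^(N)`. -/
def powerSum : ℕ → MvPolynomial (Fin 2) ℤ
  | 0 => 3
  | 1 => MvPolynomial.X 0
  | 2 => MvPolynomial.X 0 ^ 2 - 2 * MvPolynomial.X 1
  | (n+3) => MvPolynomial.X 0 * powerSum (n+2) - MvPolynomial.X 1 * powerSum (n+1) + powerSum n

/-- Evaluation of a polynomial in two (commuting) variables at a pair of elements of a
possibly noncommutative ring, sending the monomial `x^a * y^b` to `u^a * v^b`. -/
def evalP {A : Type*} [Ring A] (p : MvPolynomial (Fin 2) ℤ) (u v : A) : A :=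
  ∑ m ∈ p.support, p.coeff m • (u ^ m 0 * v ^ m 1)



namespace QSL3Aux

open QSL3

variable {R : Type} [CommRing R] {q : Rˣ}

lemma X_q_comm (i j l m : Fin 3) (h : (l < i ∧ j = m) ∨ (i = l ∧ m < j)) :
    X R q i j * X R q l m = ((q⁻¹ : Rˣ) : R) • (X R q l m * X R q i j) := by
  have h1 := RingQuot.mkAlgHom_rel R (Rel.q_comm (q := q) i j l m h)
  rw [map_mul, map_smul, map_mul] at h1
  exact h1

lemma swapA (i j l m : Fin 3) (h : (l < i ∧ j = m) ∨ (i = l ∧ m < j)) :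
    X R q l m * X R q i j = (q : R) • (X R q i j * X R q l m) := by
  rw [X_q_comm i j l m h, smul_smul, Units.mul_inv, one_smul]

lemma swapA' (i j l m : Fin 3) (t : Oq R q) (h : (l < i ∧ j = m) ∨ (i = l ∧ m < j)) :
    X R q l m * (X R q i j * t) = (q : R) • (X R q i j * (X R q l m * t)) := by
  rw [← mul_assoc, swapA i j l m h, smul_mul_assoc, mul_assoc]

lemma swapB (i j l m : Fin 3) (h : i < l ∧ m < j) :
    X R q l m * X R q i j = X R q i j * X R q l m := by
  have h1 := RingQuot.mkAlgHom_rel R (Rel.comm (q := q) i j l m h)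
  rw [map_mul, map_mul] at h1
  exact h1.symm

lemma swapB' (i j l m : Fin 3) (t : Oq R q) (h : i < l ∧ m < j) :
    X R q l m * (X R q i j * t) = X R q i j * (X R q l m * t) := by
  rw [← mul_assoc, swapB i j l m h, mul_assoc]

lemma swapC (i j l m : Fin 3) (h : l < i ∧ m < j) :
    X R q l m * X R q i j = X R q i j * X R q l m
      + ((q : R) - ((q⁻¹ : Rˣ) : R)) • (X R q i m * X R q l j) := by
  have h1 : X R q i j * X R q l m = X R q l m * X R q i j
      - ((q : R) - ((q⁻¹ : Rˣ) : R)) • (X R q i m * X R q l j) := by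
    have h1 := RingQuot.mkAlgHom_rel R (Rel.exch (q := q) i j l m h)
    rw [map_mul, map_sub, map_smul, map_mul, map_mul] at h1
    exact h1
  rw [h1]; abel

lemma swapC' (i j l m : Fin 3) (t : Oq R q) (h : l < i ∧ m < j) :
    X R q l m * (X R q i j * t) = X R q i j * (X R q l m * t)
      + ((q : R) - ((q⁻¹ : Rˣ) : R)) • (X R q i m * (X R q l j * t)) := by
  rw [← mul_assoc, swapC i j l m h, add_mul, smul_mul_assoc, mul_assoc, mul_assoc]

end QSL3Aux

/-- For any commutative ring `R` and any invertible `q ∈ R`, the elements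
`σ1` and `σ2` commute in `O_q(SL_3)`. -/
theorem s1_mul_s2_comm (R : Type) [CommRing R] (q : Rˣ) :
    QSL3.s1 R q * QSL3.s2 R q = QSL3.s2 R q * QSL3.s1 R q := by
  open QSL3Aux in
  simp only [QSL3.s1, QSL3.s2, mul_add, add_mul, mul_sub, sub_mul, smul_mul_assoc,
    mul_smul_comm, mul_assoc, smul_add, smul_sub, smul_smul]
  simp (disch := decide) only [swapA, swapA', swapB, swapB', swapC, swapC',
    mul_add, add_mul, mul_sub, sub_mul, smul_mul_assoc, mul_smul_comm, mul_assoc,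
    smul_add, smul_sub, smul_smul]
  match_scalars
  all_goals try ring
  all_goals try linear_combination (-(q:R)) * q.mul_inv
  all_goals try linear_combination ((q:R)) * q.mul_inv

end
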